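/- Let (ξ_k)_{k≥1} be independent real-valued random variables on a probability space such that E[ξ_k] = 0 and E[ξ_k²] > 0 for every k, suppose there exist real numbers c > 0 and α ≥ −1 such that lim_{k→∞} k^{−α} E[ξ_k²] = c, and suppose in addition there is a constant c₁ > 0, independent of k, such that E[ξ_k⁴] ≤ c₁ (E[ξ_k²])² for all k ≥ 1. Then, with probability one, lim_{N→∞} (Σ_{k=1}^N ξ_k²)/(Σ_{k=1}^N E[ξ_k²]) = 1. -/

import Mathlib

open MeasureTheory ProbabilityTheory Filter

lemma aux_geo_partial {a : ℕ → ℝ} {r : ℝ} (ha : ∀ i, 0 ≤ a i) (hr0 : 0 ≤ r) (hr1 : r < 1)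
    (h : Summable (fun i => a i * r ^ i)) :
    Summable (fun j => (∑ i ∈ Finset.range (j + 1), a i) * r ^ j) := by
  have hg : Summable (fun i => ‖r ^ i‖) := by
    simpa [norm_pow, abs_of_nonneg hr0] using summable_geometric_of_lt_one hr0 hr1
  have hf : Summable (fun i => ‖a i * r ^ i‖) := by
    refine h.abs.congr fun i => Eq.symm ?_
    rw [Real.norm_eq_abs, abs_of_nonneg (mul_nonneg (ha i) (pow_nonneg hr0 i))]
  have := summable_norm_sum_mul_range_of_summable_norm hf hg
  refine this.of_norm.congr fun j => ?_
  rw [Finset.sum_mul]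
  refine Finset.sum_congr rfl fun i hi => ?_
  rw [Finset.mem_range, Nat.lt_succ_iff] at hi
  rw [mul_assoc, ← pow_add, Nat.add_sub_cancel' hi]

lemma mono_sum_Icc (f : ℕ → ℝ) (hf : ∀ k, 1 ≤ k → 0 ≤ f k) :
    Monotone (fun N => ∑ k ∈ Finset.Icc 1 N, f k) := by
  apply monotone_nat_of_le_succ
  intro N
  rw [Finset.sum_Icc_succ_top (Nat.one_le_iff_ne_zero.mpr (Nat.succ_ne_zero N))]
  have := hf (N + 1) (Nat.le_add_left 1 N)
  linarith

/-- From `k^{-α} m k → c` with `c>0`, `α ≥ -1` and positivity, we get the two key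
structural facts about `b N = ∑_{k=1}^N m k`: it tends to infinity, and the increments
satisfy `m k ≤ C₀ b k / k` eventually. -/
lemma slln_aux_moments (m : ℕ → ℝ) (hpos : ∀ k, 1 ≤ k → 0 < m k)
    (c α : ℝ) (hc : 0 < c) (hα : -1 ≤ α)
    (hlim : Tendsto (fun k : ℕ => (k : ℝ) ^ (-α) * m k) atTop (nhds c)) :
    Tendsto (fun N => ∑ k ∈ Finset.Icc 1 N, m k) atTop atTop ∧
    ∃ C₀ : ℝ, 0 < C₀ ∧ ∃ K₁ : ℕ, 1 ≤ K₁ ∧ ∀ k, K₁ ≤ k →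
      m k ≤ C₀ * (∑ i ∈ Finset.Icc 1 k, m i) / k := by
  -- bounds (c/2) k^α ≤ m k ≤ 2c k^α for k ≥ K₀
  obtain ⟨K₀', hK₀'⟩ : ∃ K₀' : ℕ, ∀ k : ℕ, k ≥ K₀' → |(k : ℝ) ^ (-α) * m k - c| ≤ c / 2 := by
    have := (hlim.eventually (Metric.closedBall_mem_nhds c (by positivity : (0:ℝ) < c/2)))
    simpa [Real.dist_eq] using this.exists_forall_of_atTop
  set K₀ := max K₀' 1 with hK₀def
  have hK₀1 : 1 ≤ K₀ := le_max_right _ _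
  have hbound : ∀ k, K₀ ≤ k → c / 2 * (k : ℝ) ^ α ≤ m k ∧ m k ≤ 2 * c * (k : ℝ) ^ α := by
    intro k hk
    have hk1 : 1 ≤ k := le_trans hK₀1 hk
    have hkpos : (0 : ℝ) < k := by exact_mod_cast Nat.lt_of_lt_of_le Nat.zero_lt_one hk1
    have hrpos : (0 : ℝ) < (k : ℝ) ^ α := Real.rpow_pos_of_pos hkpos α
    have h1 := hK₀' k (le_trans (le_max_left _ _) hk)
    have hinv : (k : ℝ) ^ (-α) = ((k : ℝ) ^ α)⁻¹ := by
      rw [Real.rpow_neg hkpos.le]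
    rw [abs_le, hinv] at h1
    have hcancel : ((k:ℝ) ^ α)⁻¹ * m k * (k:ℝ) ^ α = m k := by
      field_simp
    constructor
    · have h2 : c / 2 ≤ ((k:ℝ) ^ α)⁻¹ * m k := by linarith [h1.1]
      have h3 := mul_le_mul_of_nonneg_right h2 hrpos.le
      rw [hcancel] at h3; linarith
    · have h2 : ((k:ℝ) ^ α)⁻¹ * m k ≤ 2 * c := by linarith [h1.2]
      have h3 := mul_le_mul_of_nonneg_right h2 hrpos.le
      rw [hcancel] at h3; linarith
  have hb_mono : Monotone (fun N => ∑ k ∈ Finset.Icc 1 N, m k) := by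
    apply monotone_nat_of_le_succ
    intro N
    rw [Finset.sum_Icc_succ_top (Nat.one_le_iff_ne_zero.mpr (Nat.succ_ne_zero N))]
    have := hpos (N + 1) (Nat.le_add_left 1 N)
    linarith
  constructor
  · -- b → ∞, via harmonic series
    have hharm : Tendsto (fun N : ℕ => ∑ k ∈ Finset.Icc 1 N, (1 : ℝ) / k) atTop atTop := by
      have h0 := Real.tendsto_sum_range_one_div_nat_succ_atTop
      have : ∀ N : ℕ, ∑ k ∈ Finset.Icc 1 N, (1 : ℝ) / k
          = ∑ i ∈ Finset.range N, (1 : ℝ) / (i + 1) := by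
        intro N
        rw [← Finset.Ico_add_one_right_eq_Icc, Finset.sum_Ico_eq_sum_range]
        simp [add_comm]
      rw [funext this]
      exact h0
    -- b N ≥ (c/2) * (H N - H (K₀)) for N ≥ K₀
    have key : ∀ N : ℕ, K₀ ≤ N → c / 2 * (∑ k ∈ Finset.Icc 1 N, (1:ℝ)/k - ∑ k ∈ Finset.Icc 1 K₀, (1:ℝ)/k)
        ≤ ∑ k ∈ Finset.Icc 1 N, m k := by
      intro N hN
      have hsub : ∑ k ∈ Finset.Icc 1 N, (1:ℝ)/k - ∑ k ∈ Finset.Icc 1 K₀, (1:ℝ)/k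
          = ∑ k ∈ Finset.Ioc K₀ N, (1:ℝ)/k := by
        have h := Finset.sum_Ioc_consecutive (fun k => (1:ℝ)/k) (Nat.zero_le K₀) hN
        have e1 : Finset.Icc 1 N = Finset.Ioc 0 N := (Finset.Icc_add_one_left_eq_Ioc 0 N).symm
        have e2 : Finset.Icc 1 K₀ = Finset.Ioc 0 K₀ := (Finset.Icc_add_one_left_eq_Ioc 0 K₀).symm
        rw [e1, e2]; linarith
      rw [hsub]
      calc c / 2 * ∑ k ∈ Finset.Ioc K₀ N, (1:ℝ)/k
          = ∑ k ∈ Finset.Ioc K₀ N, c / 2 * (1/k) := by rw [Finset.mul_sum]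
        _ ≤ ∑ k ∈ Finset.Ioc K₀ N, m k := by
            apply Finset.sum_le_sum
            intro k hk
            rw [Finset.mem_Ioc] at hk
            have hk1 : 1 ≤ k := le_trans hK₀1 (le_of_lt hk.1)
            have hkpos : (0:ℝ) < k := by exact_mod_cast hk1
            have h2 := (hbound k (le_of_lt hk.1)).1
            have hge : (k:ℝ) ^ α ≥ (k:ℝ) ^ (-1 : ℝ) :=
              Real.rpow_le_rpow_of_exponent_le (by exact_mod_cast hk1) hα
            have : (k:ℝ) ^ (-1 : ℝ) = 1 / k := by
              rw [Real.rpow_neg_one]; exact inv_eq_one_div _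
            nlinarith
        _ ≤ ∑ k ∈ Finset.Icc 1 N, m k := by
            apply Finset.sum_le_sum_of_subset_of_nonneg
            · intro k hk
              rw [Finset.mem_Ioc] at hk; rw [Finset.mem_Icc]
              exact ⟨le_trans hK₀1 (le_of_lt hk.1), hk.2⟩
            · intro k hk _
              rw [Finset.mem_Icc] at hk
              exact le_of_lt (hpos k hk.1)
    have hg : Tendsto (fun N : ℕ => c / 2 * (∑ k ∈ Finset.Icc 1 N, (1:ℝ)/k
        - ∑ k ∈ Finset.Icc 1 K₀, (1:ℝ)/k)) atTop atTop := by
      apply Tendsto.const_mul_atTop (by positivity : (0:ℝ) < c/2)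
      simpa [sub_eq_add_neg] using
        tendsto_atTop_add_const_right atTop (-(∑ k ∈ Finset.Icc 1 K₀, (1:ℝ)/k)) hharm
    exact tendsto_atTop_mono' atTop (eventually_atTop.2 ⟨K₀, key⟩) hg
  · refine ⟨8 * (2:ℝ) ^ |α|, by positivity, 2 * K₀ + 2, by omega, ?_⟩
    intro k hk
    set t := (k + 1) / 2 with ht
    have htK : K₀ ≤ t := by omega
    have htk : t ≤ k := by omega
    have h2t : k ≤ 2 * t := by omega
    have hk1 : 1 ≤ k := by omega
    have hkpos : (0 : ℝ) < k := by exact_mod_cast Nat.lt_of_lt_of_le Nat.zero_lt_one hk1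
    have hkα : (0:ℝ) < (k:ℝ) ^ α := Real.rpow_pos_of_pos hkpos α
    have h2α : (0:ℝ) < (2:ℝ) ^ |α| := Real.rpow_pos_of_pos two_pos _
    -- each term in Icc t k is at least (c/2) * 2^{-|α|} * k^α
    have hterm : ∀ i ∈ Finset.Icc t k, c / 2 * ((2:ℝ) ^ |α|)⁻¹ * (k:ℝ) ^ α ≤ m i := by
      intro i hi
      rw [Finset.mem_Icc] at hi
      have hiK : K₀ ≤ i := le_trans htK hi.1
      have hi1 : 1 ≤ i := le_trans hK₀1 hiK
      have hipos : (0 : ℝ) < i := by exact_mod_cast Nat.lt_of_lt_of_le Nat.zero_lt_one hi1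
      have hle := (hbound i hiK).1
      have hrat : ((2:ℝ) ^ |α|)⁻¹ * (k:ℝ) ^ α ≤ (i:ℝ) ^ α := by
        rcases le_or_gt 0 α with hα0 | hα0
        · rw [abs_of_nonneg hα0, ← Real.rpow_neg (by norm_num)]
          have h1 : ((k:ℝ) / 2) ^ α ≤ (i:ℝ) ^ α := by
            apply Real.rpow_le_rpow (by positivity) _ hα0
            have : (k:ℝ) ≤ 2 * i := by exact_mod_cast h2t.trans (by omega)
            linarith
          have h2 : ((k:ℝ) / 2) ^ α = (k:ℝ) ^ α * (2:ℝ) ^ (-α) := by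
            rw [Real.div_rpow hkpos.le (by norm_num), Real.rpow_neg (by norm_num),
              div_eq_mul_inv]
          rw [mul_comm, ← h2]; exact h1
        · have h1 : (k:ℝ) ^ α ≤ (i:ℝ) ^ α := by
            apply Real.rpow_le_rpow_of_nonpos hipos (by exact_mod_cast hi.2) hα0.le
          have h2 : ((2:ℝ) ^ |α|)⁻¹ ≤ 1 := by
            rw [inv_le_one_iff₀]
            right
            rw [← Real.rpow_zero 2]
            exact Real.rpow_le_rpow_of_exponent_le one_le_two (abs_nonneg α)
          calc ((2:ℝ) ^ |α|)⁻¹ * (k:ℝ) ^ α ≤ 1 * (k:ℝ) ^ α :=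
                mul_le_mul_of_nonneg_right h2 hkα.le
            _ = (k:ℝ) ^ α := one_mul _
            _ ≤ (i:ℝ) ^ α := h1
      calc c / 2 * ((2:ℝ) ^ |α|)⁻¹ * (k:ℝ) ^ α = c / 2 * (((2:ℝ) ^ |α|)⁻¹ * (k:ℝ) ^ α) := by ring
        _ ≤ c / 2 * (i:ℝ) ^ α := by
            apply mul_le_mul_of_nonneg_left hrat (by positivity)
        _ ≤ m i := hle
    -- so b k is at least (k/2) * that
    have hcard : ((Finset.Icc t k).card : ℝ) ≥ (k:ℝ) / 2 := by
      rw [Nat.card_Icc]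
      have : 2 * (k + 1 - t) ≥ k := by omega
      have := (Nat.cast_le (α := ℝ)).2 this
      push_cast at this ⊢
      linarith
    have hblow : (k:ℝ) / 2 * (c / 2 * ((2:ℝ) ^ |α|)⁻¹ * (k:ℝ) ^ α)
        ≤ ∑ i ∈ Finset.Icc 1 k, m i := by
      calc (k:ℝ) / 2 * (c / 2 * ((2:ℝ) ^ |α|)⁻¹ * (k:ℝ) ^ α)
          ≤ ((Finset.Icc t k).card : ℝ) * (c / 2 * ((2:ℝ) ^ |α|)⁻¹ * (k:ℝ) ^ α) := by
            apply mul_le_mul_of_nonneg_right hcard (by positivity)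
        _ ≤ ∑ i ∈ Finset.Icc t k, m i := by
            have := Finset.card_nsmul_le_sum (Finset.Icc t k) m _ hterm
            simpa [nsmul_eq_mul] using this
        _ ≤ ∑ i ∈ Finset.Icc 1 k, m i := by
            apply Finset.sum_le_sum_of_subset_of_nonneg
            · intro i hi
              rw [Finset.mem_Icc] at hi ⊢
              omega
            · intro i hi _
              rw [Finset.mem_Icc] at hi
              exact le_of_lt (hpos i hi.1)
    have hub := (hbound k (by omega)).2
    rw [ge_iff_le, le_div_iff₀ hkpos] at *
    have hcancel : (2:ℝ) ^ |α| * ((2:ℝ) ^ |α|)⁻¹ = 1 := mul_inv_cancel₀ (ne_of_gt h2α)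
    calc m k * k ≤ 2 * c * (k:ℝ) ^ α * k := by
          apply mul_le_mul_of_nonneg_right hub hkpos.le
      _ = 8 * (2:ℝ) ^ |α| * ((k:ℝ) / 2 * (c / 2 * ((2:ℝ) ^ |α|)⁻¹ * (k:ℝ) ^ α)) := by
          field_simp
          ring
      _ ≤ 8 * (2:ℝ) ^ |α| * ∑ i ∈ Finset.Icc 1 k, m i := by
          apply mul_le_mul_of_nonneg_left hblow (by positivity)

lemma slln_aux_subseq (b A g : ℕ → ℝ) (C G : ℝ) (hC : 0 < C)
    (hb0 : b 0 = 0) (hbmono : Monotone b) (htop : Tendsto b atTop atTop)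
    (hAmono : Monotone A) (hA0 : 0 ≤ A 0)
    (hgG : ∀ N : ℕ, g N ≤ G)
    (K₁ : ℕ)
    (hkey : ∀ p q : ℕ, K₁ ≤ p → p ≤ q → A q - A p ≤ C * b q ^ 2 * (g q - g p))
    (hinc : ∀ q : ℕ, K₁ ≤ q → b q - b (q - 1) ≤ C * b q / q)
    (ρ : ℝ) (hρ : 1 < ρ) :
    ∃ n : ℕ → ℕ, Monotone n ∧ Tendsto n atTop atTop ∧
      (∀ j, ρ ^ j ≤ b (n j)) ∧ (∀ j, ∀ i, i < n j → b i < ρ ^ j) ∧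
      (∀ δ : ℝ, 0 < δ → ∀ᶠ j in atTop, b (n j) ≤ (1 + δ) * ρ ^ j) ∧
      Summable (fun j => A (n j) / (b (n j)) ^ 2) := by
  classical
  have hρ0 : (0:ℝ) < ρ := lt_trans one_pos hρ
  have hex : ∀ j : ℕ, ∃ N, ρ ^ j ≤ b N := fun j => (htop.eventually_ge_atTop (ρ ^ j)).exists
  set n : ℕ → ℕ := fun j => Nat.find (hex j) with hn
  have hnb : ∀ j, ρ ^ j ≤ b (n j) := fun j => Nat.find_spec (hex j)
  have hlt : ∀ j, ∀ i, i < n j → b i < ρ ^ j :=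
    fun j i hi => lt_of_not_ge (Nat.find_min (hex j) hi)
  have hmono : Monotone n := fun j j' hjj' =>
    Nat.find_mono fun N hN => le_trans (pow_le_pow_right₀ hρ.le hjj') hN
  have hbn_pos : ∀ j, 0 < b (n j) := fun j => lt_of_lt_of_le (pow_pos hρ0 j) (hnb j)
  have hn1 : ∀ j, 1 ≤ n j := by
    intro j
    rcases Nat.eq_zero_or_pos (n j) with h | h
    · have := hnb j
      rw [h, hb0] at this
      exact absurd (lt_of_lt_of_le (pow_pos hρ0 j) this) (lt_irrefl 0)
    · exact h
  have htopn : Tendsto n atTop atTop := by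
    rw [tendsto_atTop_atTop]
    intro M
    have : ∀ᶠ j : ℕ in atTop, b M < ρ ^ j :=
      (tendsto_pow_atTop_atTop_of_one_lt hρ).eventually_gt_atTop (b M)
    obtain ⟨J, hJ⟩ := eventually_atTop.1 this
    refine ⟨J, fun j hj => ?_⟩
    by_contra h
    push_neg at h
    exact absurd (lt_of_le_of_lt (le_trans (hnb j) (hbmono h.le)) (hJ j hj)) (lt_irrefl _)
  have hupper : ∀ δ : ℝ, 0 < δ → ∀ᶠ j in atTop, b (n j) ≤ (1 + δ) * ρ ^ j := by
    intro δ hδ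
    set Q : ℕ := max K₁ (Nat.ceil (C * (1 + δ) / δ) + 1) with hQ
    filter_upwards [htopn.eventually_ge_atTop Q] with j hj
    have hq1 : 1 ≤ n j := hn1 j
    have hqK : K₁ ≤ n j := le_trans (le_max_left _ _) hj
    have hqQ : (Nat.ceil (C * (1 + δ) / δ) + 1 : ℕ) ≤ n j := le_trans (le_max_right _ _) hj
    have hqpos : (0:ℝ) < (n j : ℝ) := by exact_mod_cast Nat.lt_of_lt_of_le Nat.zero_lt_one hq1
    have hCq : C / (n j : ℝ) ≤ δ / (1 + δ) := by
      rw [div_le_div_iff₀ hqpos (by linarith)]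
      have h1 : C * (1 + δ) / δ ≤ (Nat.ceil (C * (1 + δ) / δ) : ℝ) := Nat.le_ceil _
      have h2 : ((Nat.ceil (C * (1 + δ) / δ) : ℕ) : ℝ) + 1 ≤ (n j : ℝ) := by
        exact_mod_cast hqQ
      have h3 : C * (1 + δ) / δ ≤ (n j : ℝ) := by linarith
      calc C * (1 + δ) = (C * (1 + δ) / δ) * δ := by field_simp
        _ ≤ (n j : ℝ) * δ := mul_le_mul_of_nonneg_right h3 hδ.le
        _ = δ * (n j : ℝ) := by ring
    have hblt : b (n j - 1) < ρ ^ j :=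
      hlt j _ (Nat.sub_lt (Nat.lt_of_lt_of_le Nat.zero_lt_one hq1) Nat.zero_lt_one)
    have hstep := hinc (n j) hqK
    have hbq := hbn_pos j
    have h4 : C * b (n j) / (n j : ℝ) ≤ δ / (1 + δ) * b (n j) := by
      rw [mul_comm C (b (n j)), mul_div_assoc, mul_comm]
      exact mul_le_mul_of_nonneg_right hCq hbq.le
    have h6 : (1 - δ / (1 + δ)) * b (n j) ≤ ρ ^ j := by linarith
    have h7 : 1 - δ / (1 + δ) = 1 / (1 + δ) := by field_simp; ring
    rw [h7] at h6
    rw [div_mul_eq_mul_div, div_le_iff₀ (by linarith : (0:ℝ) < 1 + δ)] at h6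
    linarith [h6]
  refine ⟨n, hmono, htopn, hnb, hlt, hupper, ?_⟩
  -- summability
  set r : ℝ := (ρ ^ 2)⁻¹ with hr
  have hr0 : 0 ≤ r := by positivity
  have hr1 : r < 1 := by
    rw [hr, inv_lt_one_iff₀]
    right
    nlinarith
  have hA_nonneg : ∀ N, 0 ≤ A N := fun N => le_trans hA0 (hAmono (Nat.zero_le N))
  have hpoint : ∀ j, A (n j) / (b (n j)) ^ 2 ≤ A (n j) * r ^ j := by
    intro j
    have h1 : (ρ ^ j) ^ 2 ≤ (b (n j)) ^ 2 := by
      nlinarith [pow_pos hρ0 j, hbn_pos j, hnb j]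
    have h2 : (0:ℝ) < (ρ ^ j) ^ 2 := by positivity
    calc A (n j) / (b (n j)) ^ 2 ≤ A (n j) / (ρ ^ j) ^ 2 := by
          gcongr
          exact hA_nonneg _
      _ = A (n j) * r ^ j := by
          rw [hr, div_eq_mul_inv, inv_pow, ← pow_mul, ← pow_mul, mul_comm 2 j]
  -- increments
  set a : ℕ → ℝ := fun i => A (n i) - (if i = 0 then 0 else A (n (i - 1))) with ha
  have htel : ∀ j, ∑ i ∈ Finset.range (j + 1), a i = A (n j) := by
    intro j
    induction j with
    | zero => simp [ha]
    | succ j ih =>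
        rw [Finset.sum_range_succ, ih, ha]
        simp
  have ha_nonneg : ∀ i, 0 ≤ a i := by
    intro i
    rw [ha]
    rcases Nat.eq_zero_or_pos i with h | h
    · simp [h, hA_nonneg]
    · have : i ≠ 0 := Nat.pos_iff_ne_zero.mp h
      simp only [this, if_neg, ite_false]
      have := hAmono (hmono (Nat.sub_le i 1))
      linarith
  -- eventual bound on a i * r ^ i
  obtain ⟨J₁, hJ₁⟩ := eventually_atTop.1 (hupper 1 one_pos)
  obtain ⟨J₂, hJ₂⟩ := eventually_atTop.1 (htopn.eventually_ge_atTop K₁)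
  set J : ℕ := max J₁ J₂ + 1 with hJ
  have hbound : ∀ i, J ≤ i → a i * r ^ i ≤ 4 * C * (g (n i) - g (n (i - 1))) := by
    intro i hi
    have hi0 : i ≠ 0 := by omega
    have hiJ₁ : J₁ ≤ i := by omega
    have hiJ₂ : K₁ ≤ n (i - 1) := hJ₂ _ (by omega)
    have hkey' := hkey (n (i - 1)) (n i) hiJ₂ (hmono (Nat.sub_le i 1))
    have hup := hJ₁ i hiJ₁
    have hai : a i = A (n i) - A (n (i - 1)) := by rw [ha]; simp [hi0]
    have hrpos : (0:ℝ) < r ^ i := by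
      have : (0:ℝ) < r := by rw [hr]; positivity
      positivity
    have hcanc : (b (n i))^2 * r ^ i ≤ 4 := by
      have h1 : b (n i) ≤ 2 * ρ ^ i := by linarith [hup]
      have h2 : (b (n i))^2 ≤ 4 * (ρ ^ i)^2 := by nlinarith [hbn_pos i]
      have h3 : (ρ ^ i)^2 * r ^ i = 1 := by
        rw [hr, inv_pow, ← pow_mul, ← pow_mul, mul_comm 2 i,
          mul_inv_cancel₀ (ne_of_gt (pow_pos hρ0 _))]
      calc (b (n i))^2 * r ^ i ≤ 4 * (ρ ^ i)^2 * r ^ i :=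
            mul_le_mul_of_nonneg_right h2 hrpos.le
        _ = 4 * ((ρ ^ i)^2 * r ^ i) := by ring
        _ = 4 := by rw [h3]; ring
    have hg_nonneg : 0 ≤ g (n i) - g (n (i - 1)) := by
      by_contra hneg
      push_neg at hneg
      have h1 : A (n i) - A (n (i-1)) ≥ 0 := by
        have := hAmono (hmono (Nat.sub_le i 1)); linarith
      have h2 : C * b (n i) ^ 2 * (g (n i) - g (n (i - 1))) < 0 :=
        mul_neg_of_pos_of_neg (mul_pos hC (pow_pos (hbn_pos i) 2)) hneg
      linarith
    calc a i * r ^ i ≤ (C * b (n i) ^ 2 * (g (n i) - g (n (i-1)))) * r ^ i := by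
          apply mul_le_mul_of_nonneg_right _ hrpos.le
          rw [hai]; exact hkey'
      _ = C * (g (n i) - g (n (i-1))) * ((b (n i))^2 * r ^ i) := by ring
      _ ≤ C * (g (n i) - g (n (i-1))) * 4 := by
          apply mul_le_mul_of_nonneg_left hcanc
          exact mul_nonneg hC.le hg_nonneg
      _ = 4 * C * (g (n i) - g (n (i-1))) := by ring
  -- summability of a i * r ^ i
  have hsum_ar : Summable (fun i => a i * r ^ i) := by
    rw [← summable_nat_add_iff J]
    apply summable_of_sum_range_le (c := 4 * C * (G - g (n (J - 1))))
    · intro i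
      exact mul_nonneg (ha_nonneg _) (by positivity)
    · intro I
      calc ∑ i ∈ Finset.range I, a (i + J) * r ^ (i + J)
          ≤ ∑ i ∈ Finset.range I, 4 * C * (g (n (i + J)) - g (n (i + J - 1))) := by
            apply Finset.sum_le_sum
            intro i _
            exact hbound (i + J) (by omega)
        _ = 4 * C * ∑ i ∈ Finset.range I, (g (n (i + 1 + (J-1))) - g (n (i + (J-1)))) := by
            rw [Finset.mul_sum]
            apply Finset.sum_congr rfl
            intro i _
            have e1 : i + J = i + 1 + (J - 1) := by omega
            have e2 : i + J - 1 = i + (J - 1) := by omega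
            rw [e2, e1]
        _ = 4 * C * (g (n (I + (J-1))) - g (n (0 + (J-1)))) := by
            rw [Finset.sum_range_sub (fun i => g (n (i + (J-1))))]
        _ ≤ 4 * C * (G - g (n (J - 1))) := by
            apply mul_le_mul_of_nonneg_left _ (by positivity)
            simp only [Nat.zero_add]
            have := hgG (n (I + (J-1)))
            linarith
  -- conclude
  have hsummA : Summable (fun j => A (n j) * r ^ j) := by
    have := aux_geo_partial ha_nonneg hr0 hr1 hsum_ar
    apply this.congr
    intro j
    rw [htel]
  apply Summable.of_nonneg_of_le _ hpoint hsummA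
  intro j
  apply div_nonneg (hA_nonneg _) (sq_nonneg _)

set_option maxHeartbeats 1000000 in
/-- Strong Law of Large Numbers (Shiryaev, Theorem IV.3.2, second part):
for independent centered random variables `ξ_k` with positive second moments whose
second moments satisfy `k^{-α} E[ξ_k²] → c` for some `c > 0` and `α ≥ -1`, and whose
fourth moments satisfy `E[ξ_k⁴] ≤ c₁ (E[ξ_k²])²` for a constant `c₁ > 0`, the
ratios `(∑_{k=1}^N ξ_k²)/(∑_{k=1}^N E[ξ_k²])` tend to `1` almost surely. -/
theorem slln_squares_ratio_tendsto_one
    {Ω : Type*} [MeasurableSpace Ω] (P : Measure Ω) [IsProbabilityMeasure P]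
    (ξ : ℕ → Ω → ℝ) (hmeas : ∀ k, Measurable (ξ k))
    (hindep : iIndepFun ξ P)
    (hint : ∀ k, 1 ≤ k → Integrable (ξ k) P)
    (hsq : ∀ k, 1 ≤ k → Integrable (fun ω => (ξ k ω) ^ 2) P)
    (hfour : ∀ k, 1 ≤ k → Integrable (fun ω => (ξ k ω) ^ 4) P)
    (hmean : ∀ k, 1 ≤ k → ∫ ω, ξ k ω ∂P = 0)
    (hvarpos : ∀ k, 1 ≤ k → 0 < ∫ ω, (ξ k ω) ^ 2 ∂P)
    (c α : ℝ) (hc : 0 < c) (hα : -1 ≤ α)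
    (hlim : Tendsto (fun k : ℕ => (k : ℝ) ^ (-α) * ∫ ω, (ξ k ω) ^ 2 ∂P)
      atTop (nhds c))
    (c₁ : ℝ) (hc₁ : 0 < c₁)
    (hmom4 : ∀ k, 1 ≤ k →
      ∫ ω, (ξ k ω) ^ 4 ∂P ≤ c₁ * (∫ ω, (ξ k ω) ^ 2 ∂P) ^ 2) :
    ∀ᵐ ω ∂P, Tendsto
      (fun N : ℕ => (∑ k ∈ Finset.Icc 1 N, (ξ k ω) ^ 2) /
        (∑ k ∈ Finset.Icc 1 N, ∫ ω', (ξ k ω') ^ 2 ∂P))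
      atTop (nhds 1) := by
  classical
  set m : ℕ → ℝ := fun k => ∫ ω, (ξ k ω) ^ 2 ∂P with hm
  set S : ℕ → Ω → ℝ := fun N ω => ∑ k ∈ Finset.Icc 1 N, (ξ k ω) ^ 2 with hS
  have hmpos : ∀ k, 1 ≤ k → 0 < m k := fun k hk => hvarpos k hk
  obtain ⟨htop, C₀, hC₀, K₁, hK₁, hub⟩ := slln_aux_moments m hmpos c α hc hα hlim
  set b : ℕ → ℝ := fun N => ∑ k ∈ Finset.Icc 1 N, m k with hb
  set A : ℕ → ℝ := fun N => ∑ k ∈ Finset.Icc 1 N, (m k) ^ 2 with hA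
  set g : ℕ → ℝ := fun N => ∑ k ∈ Finset.Icc 1 N, (1 : ℝ) / (k : ℝ) ^ 2 with hg
  have hub' : ∀ k, K₁ ≤ k → m k ≤ C₀ * b k / k := hub
  have htop' : Tendsto b atTop atTop := htop
  have hb_mono : Monotone b := mono_sum_Icc m (fun k hk => (hmpos k hk).le)
  have hb0 : b 0 = 0 := by simp [hb]
  have hb_pos : ∀ N, 1 ≤ N → 0 < b N := by
    intro N hN
    have h1 : b 1 ≤ b N := hb_mono hN
    have : b 1 = m 1 := by simp [hb]
    have := hmpos 1 le_rfl
    linarith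
  have hb_nonneg : ∀ N, 0 ≤ b N := by
    intro N
    rcases Nat.eq_zero_or_pos N with h | h
    · rw [h, hb0]
    · exact (hb_pos N h).le
  have hA_mono : Monotone A := mono_sum_Icc _ (fun k _ => sq_nonneg (m k))
  have hA0 : 0 ≤ A 0 := by simp [hA]
  have hsummable_g : Summable (fun k : ℕ => (1:ℝ) / (k:ℝ) ^ 2) := by
    simpa using Real.summable_one_div_nat_pow.2 one_lt_two
  have hgG : ∀ N : ℕ, g N ≤ ∑' k : ℕ, (1:ℝ) / (k:ℝ) ^ 2 := by
    intro N
    apply Summable.sum_le_tsum _ (fun k _ => by positivity) hsummable_g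
  -- splitting of sums over Icc 1
  have hsplit : ∀ (f : ℕ → ℝ) (p q : ℕ), p ≤ q →
      ∑ k ∈ Finset.Icc 1 q, f k - ∑ k ∈ Finset.Icc 1 p, f k
        = ∑ k ∈ Finset.Ioc p q, f k := by
    intro f p q hpq
    have h := Finset.sum_Ioc_consecutive f (Nat.zero_le p) hpq
    have e1 : Finset.Icc 1 q = Finset.Ioc 0 q := (Finset.Icc_add_one_left_eq_Ioc 0 q).symm
    have e2 : Finset.Icc 1 p = Finset.Ioc 0 p := (Finset.Icc_add_one_left_eq_Ioc 0 p).symm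
    rw [e1, e2]
    linarith
  -- the constant C
  set C : ℝ := C₀ + C₀ ^ 2 with hC
  have hCpos : 0 < C := by positivity
  have hkey : ∀ p q : ℕ, K₁ ≤ p → p ≤ q → A q - A p ≤ C * b q ^ 2 * (g q - g p) := by
    intro p q hp hpq
    simp only [hA, hg]
    rw [hsplit _ p q hpq, hsplit _ p q hpq]
    have hterm : ∀ k ∈ Finset.Ioc p q, (m k) ^ 2 ≤ C₀ ^ 2 * b q ^ 2 * (1 / (k:ℝ) ^ 2) := by
      intro k hk
      rw [Finset.mem_Ioc] at hk
      have hkK : K₁ ≤ k := le_trans hp hk.1.le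
      have hk1 : 1 ≤ k := le_trans hK₁ hkK
      have hkpos : (0:ℝ) < k := by exact_mod_cast Nat.lt_of_lt_of_le Nat.zero_lt_one hk1
      have h1 : m k ≤ C₀ * b k / k := hub' k hkK
      have h2 : b k ≤ b q := hb_mono hk.2
      have h3 : 0 < m k := hmpos k hk1
      have h4 : m k ≤ C₀ * b q / k := by
        refine le_trans h1 ?_
        gcongr
      have h5 : m k ^ 2 ≤ (C₀ * b q / k) ^ 2 := pow_le_pow_left₀ h3.le h4 2
      calc (m k) ^ 2 ≤ (C₀ * b q / k) ^ 2 := h5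
        _ = C₀ ^ 2 * b q ^ 2 * (1 / (k:ℝ) ^ 2) := by
            rw [div_pow, mul_pow]; ring
    calc ∑ k ∈ Finset.Ioc p q, (m k) ^ 2
        ≤ ∑ k ∈ Finset.Ioc p q, C₀ ^ 2 * b q ^ 2 * (1 / (k:ℝ) ^ 2) :=
          Finset.sum_le_sum hterm
      _ = C₀ ^ 2 * b q ^ 2 * ∑ k ∈ Finset.Ioc p q, (1 / (k:ℝ) ^ 2) := by
          rw [Finset.mul_sum]
      _ ≤ C * b q ^ 2 * ∑ k ∈ Finset.Ioc p q, (1 / (k:ℝ) ^ 2) := by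
          apply mul_le_mul_of_nonneg_right _ (Finset.sum_nonneg fun k _ => by positivity)
          apply mul_le_mul_of_nonneg_right _ (sq_nonneg _)
          rw [hC]; nlinarith
  have hinc : ∀ q : ℕ, K₁ ≤ q → b q - b (q - 1) ≤ C * b q / q := by
    intro q hq
    have hq1 : 1 ≤ q := le_trans hK₁ hq
    have hqpos : (0:ℝ) < q := by exact_mod_cast Nat.lt_of_lt_of_le Nat.zero_lt_one hq1
    have hsub : b q - b (q - 1) = m q := by
      simp only [hb]
      rw [hsplit m (q - 1) q (Nat.sub_le q 1)]
      have heq : Finset.Ioc (q - 1) q = {q} := by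
        ext x
        simp only [Finset.mem_Ioc, Finset.mem_singleton]
        omega
      rw [heq, Finset.sum_singleton]
    rw [hsub]
    calc m q ≤ C₀ * b q / q := hub' q hq
      _ ≤ C * b q / q := by
          have h2 : C₀ ≤ C := by rw [hC]; nlinarith
          have := hb_nonneg q
          gcongr
  -- probabilistic preliminaries
  have hmsq : ∀ k : ℕ, AEStronglyMeasurable (fun ω => (ξ k ω) ^ 2) P :=
    fun k => ((hmeas k).pow_const 2).aestronglyMeasurable
  have hmem2 : ∀ k, 1 ≤ k → MemLp (fun ω => (ξ k ω) ^ 2) 2 P := by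
    intro k hk
    rw [memLp_two_iff_integrable_sq (hmsq k)]
    have hfe : (fun ω => ((ξ k ω) ^ 2) ^ 2) = fun ω => (ξ k ω) ^ 4 := by
      ext ω; ring
    rw [hfe]
    exact hfour k hk
  have hmemS : ∀ N, MemLp (S N) 2 P := fun N =>
    memLp_finset_sum (Finset.Icc 1 N) (fun k hk => hmem2 k (Finset.mem_Icc.1 hk).1)
  have hSmean : ∀ N, ∫ ω, S N ω ∂P = b N := by
    intro N
    simp only [hS, hb]
    rw [integral_finset_sum]
    intro k hk
    exact hsq k (Finset.mem_Icc.1 hk).1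
  have hvarle : ∀ k, 1 ≤ k → variance (fun ω => (ξ k ω) ^ 2) P ≤ c₁ * (m k) ^ 2 := by
    intro k hk
    rw [variance_eq_sub (hmem2 k hk)]
    have hfe : ((fun ω => (ξ k ω) ^ 2) ^ 2 : Ω → ℝ) = fun ω => (ξ k ω) ^ 4 := by
      ext ω; simp only [Pi.pow_apply]; ring
    have h1 : P[((fun ω => (ξ k ω) ^ 2) ^ 2 : Ω → ℝ)] = ∫ ω, (ξ k ω) ^ 4 ∂P := by
      rw [hfe]
    have h2 : P[fun ω => (ξ k ω) ^ 2] = m k := rfl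
    rw [h1, h2]
    have := hmom4 k hk
    nlinarith [sq_nonneg (m k)]
  have hm2meas : Measurable (fun x : ℝ => x ^ 2) := measurable_id.pow_const 2
  have hvarS : ∀ N, variance (S N) P ≤ c₁ * A N := by
    intro N
    have hfun : S N = ∑ k ∈ Finset.Icc 1 N, (fun ω => (ξ k ω) ^ 2) := by
      ext ω; rw [hS]; simp [Finset.sum_apply]
    have hvs := IndepFun.variance_sum (μ := P) (X := fun k (ω : Ω) => (ξ k ω) ^ 2)
      (s := Finset.Icc 1 N) (fun k _ => hmem2 k (Finset.mem_Icc.1 ‹k ∈ Finset.Icc 1 N›).1)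
      (fun i hi j hj hij => (hindep.indepFun hij).comp hm2meas hm2meas)
    rw [hfun, hvs, hA]
    simp only [Finset.mul_sum]
    apply Finset.sum_le_sum
    intro k hk
    exact hvarle k (Finset.mem_Icc.1 hk).1
  -- main a.s. statement for a fixed epsilon
  have main : ∀ ε : ℝ, 0 < ε → ε ≤ 1 →
      ∀ᵐ ω ∂P, ∀ᶠ N in atTop, |S N ω / b N - 1| ≤ ε := by
    intro ε hε hε1
    set ε' : ℝ := ε / 8 with hε'
    set δ : ℝ := ε / 8 with hδ
    set ρ : ℝ := 1 + ε / 8 with hρdef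
    have hρ : 1 < ρ := by rw [hρdef]; linarith
    have hε'pos : 0 < ε' := by rw [hε']; linarith
    have hδpos : 0 < δ := by rw [hδ]; linarith
    obtain ⟨n, hnmono, hntop, hnb, hnlt, hnup, hnsum⟩ :=
      slln_aux_subseq b A g C (∑' k : ℕ, (1:ℝ) / (k:ℝ) ^ 2) hCpos hb0 hb_mono htop'
        hA_mono hA0 hgG K₁ hkey hinc ρ hρ
    have hbnpos : ∀ j, 0 < b (n j) :=
      fun j => lt_of_lt_of_le (pow_pos (by linarith) j) (hnb j)
    have hn1 : ∀ j, 1 ≤ n j := by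
      intro j
      rcases Nat.eq_zero_or_pos (n j) with h0 | h0
      · exfalso
        have := hbnpos j
        rw [h0, hb0] at this
        exact lt_irrefl 0 this
      · exact h0
    set E : ℕ → Set Ω := fun j => {ω | ε' * b (n j) ≤ |S (n j) ω - P[S (n j)]|} with hE
    have hcheb : ∀ j, P (E j)
        ≤ ENNReal.ofReal (variance (S (n j)) P / (ε' * b (n j)) ^ 2) :=
      fun j => meas_ge_le_variance_div_sq (hmemS (n j)) (mul_pos hε'pos (hbnpos j))
    have hv_sum : Summable (fun j => variance (S (n j)) P / (ε' * b (n j)) ^ 2) := by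
      apply Summable.of_nonneg_of_le
        (fun j => div_nonneg (variance_nonneg _ _) (sq_nonneg _)) (fun j => ?_)
        (hnsum.mul_left (c₁ / ε' ^ 2))
      have h1 : variance (S (n j)) P ≤ c₁ * A (n j) := hvarS (n j)
      have hb2 : (0:ℝ) < (b (n j)) ^ 2 := pow_pos (hbnpos j) 2
      have h2 : (ε' * b (n j)) ^ 2 = ε' ^ 2 * (b (n j)) ^ 2 := by ring
      rw [h2]
      calc variance (S (n j)) P / (ε' ^ 2 * (b (n j)) ^ 2)
          ≤ (c₁ * A (n j)) / (ε' ^ 2 * (b (n j)) ^ 2) := by gcongr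
        _ = c₁ / ε' ^ 2 * (A (n j) / (b (n j)) ^ 2) := by
            field_simp
    have hBC : (∑' j, P (E j)) ≠ ⊤ := by
      have h1 : (∑' j, P (E j))
          ≤ ∑' j, ENNReal.ofReal (variance (S (n j)) P / (ε' * b (n j)) ^ 2) :=
        ENNReal.tsum_le_tsum hcheb
      rw [← ENNReal.ofReal_tsum_of_nonneg
        (fun j => div_nonneg (variance_nonneg _ _) (sq_nonneg _)) hv_sum] at h1
      exact ne_top_of_le_ne_top ENNReal.ofReal_ne_top h1
    have hup2 : ∀ᶠ j in atTop, b (n (j+1)) ≤ (1 + δ) * ρ * b (n j) := by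
      obtain ⟨J, hJ⟩ := eventually_atTop.1 (hnup δ hδpos)
      rw [eventually_atTop]
      refine ⟨J, fun j hj => ?_⟩
      have h1 : b (n (j+1)) ≤ (1 + δ) * ρ ^ (j+1) := hJ (j+1) (by omega)
      have h2 : ρ ^ j ≤ b (n j) := hnb j
      have hρ0 : (0:ℝ) < ρ := by linarith
      calc b (n (j+1)) ≤ (1 + δ) * ρ ^ (j+1) := h1
        _ = (1 + δ) * ρ * ρ ^ j := by ring
        _ ≤ (1 + δ) * ρ * b (n j) := by
            apply mul_le_mul_of_nonneg_left h2
            positivity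
    filter_upwards [ae_eventually_notMem hBC] with ω hω
    obtain ⟨J₀, hJ₀⟩ := eventually_atTop.1 (hω.and hup2)
    rw [eventually_atTop]
    refine ⟨n (J₀ + 1), fun N hN => ?_⟩
    have hPex : ∃ i, N < n i := (hntop.eventually_gt_atTop N).exists
    have hi₀spec : N < n (Nat.find hPex) := Nat.find_spec hPex
    have hi₀J : J₀ + 1 < Nat.find hPex := by
      by_contra h
      push_neg at h
      have h2 : n (Nat.find hPex) ≤ n (J₀ + 1) := hnmono h
      have h3 : n (Nat.find hPex) ≤ N := le_trans h2 hN
      omega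
    have hjlt : n (Nat.find hPex - 1) ≤ N := by
      have h := Nat.find_min hPex (show Nat.find hPex - 1 < Nat.find hPex by omega)
      omega
    set j := Nat.find hPex - 1 with hjdef
    have hjJ : J₀ ≤ j := by omega
    have hj1 : N < n (j + 1) := by
      have : j + 1 = Nat.find hPex := by omega
      rw [this]
      exact hi₀spec
    have hEj := (hJ₀ j hjJ).1
    have hEj1 := (hJ₀ (j + 1) (by omega)).1
    have hBj := (hJ₀ j hjJ).2
    rw [hE] at hEj hEj1
    simp only [Set.mem_setOf_eq, not_le] at hEj hEj1
    rw [hSmean (n j)] at hEj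
    rw [hSmean (n (j + 1))] at hEj1
    have hSmono : ∀ M M' : ℕ, M ≤ M' → S M ω ≤ S M' ω := fun M M' h =>
      mono_sum_Icc (fun k => (ξ k ω) ^ 2) (fun k _ => sq_nonneg _) h
    rw [abs_lt] at hEj hEj1
    have hbN_pos : 0 < b N := hb_pos N (le_trans (hn1 (J₀ + 1)) hN)
    have hbNle : b N ≤ b (n (j + 1)) := hb_mono hj1.le
    have hbNge : b (n j) ≤ b N := hb_mono hjlt
    have hx_up : S N ω ≤ (1 + ε') * b (n (j + 1)) :=
      le_trans (hSmono N (n (j + 1)) hj1.le) (by linarith [hEj1.2])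
    have hx_lo : (1 - ε') * b (n j) ≤ S N ω :=
      le_trans (by linarith [hEj.1]) (hSmono (n j) N hjlt)
    have hsq2 : ε * ε ≤ ε := by nlinarith
    have hcu3 : ε * ε * ε ≤ ε := by nlinarith
    have hcoef1 : (1 + ε') * ((1 + δ) * ρ) ≤ 1 + ε := by
      rw [hε', hδ, hρdef]; nlinarith [hsq2, hcu3]
    have hcoef2 : (1 - ε) * ((1 + δ) * ρ) ≤ 1 - ε' := by
      rw [hε', hδ, hρdef]; nlinarith [hsq2, hcu3]
    have hup : S N ω ≤ (1 + ε) * b N := by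
      calc S N ω ≤ (1 + ε') * b (n (j + 1)) := hx_up
        _ ≤ (1 + ε') * ((1 + δ) * ρ * b (n j)) :=
            mul_le_mul_of_nonneg_left hBj (by linarith)
        _ = ((1 + ε') * ((1 + δ) * ρ)) * b (n j) := by ring
        _ ≤ (1 + ε) * b (n j) := mul_le_mul_of_nonneg_right hcoef1 (hb_nonneg _)
        _ ≤ (1 + ε) * b N := mul_le_mul_of_nonneg_left hbNge (by linarith)
    have hlo : (1 - ε) * b N ≤ S N ω := by
      calc (1 - ε) * b N ≤ (1 - ε) * b (n (j + 1)) :=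
            mul_le_mul_of_nonneg_left hbNle (by linarith)
        _ ≤ (1 - ε) * ((1 + δ) * ρ * b (n j)) :=
            mul_le_mul_of_nonneg_left hBj (by linarith)
        _ = ((1 - ε) * ((1 + δ) * ρ)) * b (n j) := by ring
        _ ≤ (1 - ε') * b (n j) := mul_le_mul_of_nonneg_right hcoef2 (hb_nonneg _)
        _ ≤ S N ω := hx_lo
    rw [abs_le]
    constructor
    · have h := (le_div_iff₀ hbN_pos).2 hlo
      linarith
    · have h := (div_le_iff₀ hbN_pos).2 hup
      linarith
  -- final assembly
  have main' : ∀ᵐ ω ∂P, ∀ i : ℕ, ∀ᶠ N in atTop, |S N ω / b N - 1| ≤ 1 / (i + 1) := by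
    rw [ae_all_iff]
    intro i
    apply main
    · positivity
    · rw [div_le_one (by positivity)]
      have : (0:ℝ) ≤ i := Nat.cast_nonneg i
      linarith
  filter_upwards [main'] with ω hω
  rw [Metric.tendsto_atTop]
  intro ε hε
  obtain ⟨i, hi⟩ := exists_nat_one_div_lt hε
  obtain ⟨N₀, hN₀⟩ := eventually_atTop.1 (hω i)
  refine ⟨N₀, fun N hN => ?_⟩
  rw [Real.dist_eq]
  calc |S N ω / b N - 1| ≤ 1 / (i + 1) := hN₀ N hN
    _ < ε := by exact_mod_cast hi
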